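/- Let X be a locally compact Hausdorff space, (x_n)_{n∈ℕ} a sequence in X, and (U_n)_{n∈ℕ} a sequence of pairwise disjoint open subsets of X with x_n ∈ U_n for all n. Let g_n : U_n → ℝ be continuous functions and t ∈ ℝ such that g_n(x_n) → t as n → ∞. Then there exists a continuous function f : X → ℝ such that for each n, f coincides with g_n on some neighbourhood of x_n, and f(x) = t for all x ∉ ⋃_n U_n. -/

import Mathlib

open Set Topology Filter

/-- Let `X` be locally compact Hausdorff, `(xₙ)` a sequence, `(Uₙ)` pairwise disjoint open
sets with `xₙ ∈ Uₙ`, and `gₙ : Uₙ → ℝ` continuous with `gₙ(xₙ) → t`. Then there is a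
continuous `f : X → ℝ` coinciding with `gₙ` on a neighbourhood of `xₙ` for each `n`, and
equal to `t` off `⋃ₙ Uₙ`. -/
theorem stmt_8 {X : Type*} [TopologicalSpace X] [LocallyCompactSpace X] [T2Space X]
    (x : ℕ → X) (U : ℕ → Set X)
    (hUo : ∀ n, IsOpen (U n)) (hUd : Pairwise (Function.onFun Disjoint U))
    (hx : ∀ n, x n ∈ U n)
    (g : (n : ℕ) → C(↥(U n), ℝ)) (t : ℝ)
    (hg : Tendsto (fun n => g n ⟨x n, hx n⟩) atTop (nhds t)) :
    ∃ f : X → ℝ, Continuous f ∧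
      (∀ n, ∃ V : Set X, V ∈ nhds (x n) ∧ ∃ hVU : V ⊆ U n,
        ∀ z, ∀ hz : z ∈ V, f z = g n ⟨z, hVU hz⟩) ∧
      ∀ z, z ∉ (⋃ n, U n) → f z = t := by
  classical
  -- the error bound
  set ε : ℕ → ℝ := fun n => |g n ⟨x n, hx n⟩ - t| + ((n : ℝ) + 1)⁻¹ with hεdef
  have hεpos : ∀ n, 0 < ε n := fun n =>
    add_pos_of_nonneg_of_pos (abs_nonneg _) (by positivity)
  have hε0 : Tendsto ε atTop (nhds 0) := by
    have h1 : Tendsto (fun n => |g n ⟨x n, hx n⟩ - t|) atTop (nhds 0) := by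
      have := (hg.sub (tendsto_const_nhds (x := t))).abs
      simpa using this
    have h2 : Tendsto (fun n : ℕ => ((n : ℝ) + 1)⁻¹) atTop (nhds 0) := by
      simpa [one_div] using (tendsto_one_div_add_atTop_nhds_zero_nat : Tendsto (fun n : ℕ => 1 / ((n : ℝ) + 1)) atTop (nhds 0))
    simpa using h1.add h2
  -- shrink U n to an open V n where |g n - t| < ε n
  have key : ∀ n, ∃ V : Set X, IsOpen V ∧ x n ∈ V ∧ V ⊆ U n ∧
      ∀ z ∈ V, ∀ h : z ∈ U n, |g n ⟨z, h⟩ - t| < ε n := by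
    intro n
    set S : Set ↥(U n) := {p | |g n p - t| < ε n} with hS
    have hSopen : IsOpen S := by
      have : Continuous fun p : ↥(U n) => |g n p - t| :=
        ((g n).continuous.sub continuous_const).abs
      exact isOpen_lt this continuous_const
    have hxS : (⟨x n, hx n⟩ : ↥(U n)) ∈ S := by
      simp only [hS, mem_setOf_eq, hεdef]
      have : (0 : ℝ) < ((n : ℝ) + 1)⁻¹ := by positivity
      linarith
    refine ⟨Subtype.val '' S, (hUo n).isOpenMap_subtype_val S hSopen,
      ⟨⟨x n, hx n⟩, hxS, rfl⟩, ?_, ?_⟩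
    · rintro z ⟨p, _, rfl⟩; exact p.2
    · rintro z ⟨p, hp, rfl⟩ h
      have : (⟨(p : X), h⟩ : ↥(U n)) = p := Subtype.ext rfl
      rw [this]; exact hp
  choose V hVo hxV hVU hVb using key
  -- nested compact neighbourhoods
  have key1 : ∀ n, ∃ K : Set X, IsCompact K ∧ x n ∈ interior K ∧ K ⊆ V n :=
    fun n => exists_compact_subset (hVo n) (hxV n)
  choose K1 hK1c hxK1 hK1V using key1
  have key2 : ∀ n, ∃ K : Set X, IsCompact K ∧ x n ∈ interior K ∧ K ⊆ interior (K1 n) :=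
    fun n => exists_compact_subset isOpen_interior (hxK1 n)
  choose K2 hK2c hxK2 hK2K1 using key2
  -- bump functions
  have keyφ : ∀ n, ∃ φ : C(X, ℝ), tsupport φ ⊆ interior (K1 n) ∧ EqOn φ 1 (K2 n) ∧
      ∀ z, φ z ∈ Icc (0 : ℝ) 1 := by
    intro n
    have hclcomp : IsCompact (closure (interior (K1 n))) :=
      (hK1c n).of_isClosed_subset isClosed_closure
        (closure_minimal interior_subset (hK1c n).isClosed)
    exact exists_tsupport_one_of_isOpen_isClosed isOpen_interior hclcomp
      (hK2c n).isClosed (hK2K1 n)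
  choose φ hφsupp hφ1 hφ01 using keyφ
  have hφV : ∀ n, tsupport (φ n) ⊆ V n := fun n =>
    (hφsupp n).trans (interior_subset.trans (hK1V n))
  -- the local pieces
  set e : ℕ → X → ℝ := fun n z =>
    if h : z ∈ V n then φ n z * (g n ⟨z, hVU n h⟩ - t) else 0 with hedef
  have he0 : ∀ n z, z ∉ V n → e n z = 0 := fun n z h => dif_neg h
  have he0' : ∀ n z, z ∉ tsupport (φ n) → e n z = 0 := by
    intro n z hz
    by_cases h : z ∈ V n
    · simp only [hedef, dif_pos h, image_eq_zero_of_notMem_tsupport hz, zero_mul]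
    · exact he0 n z h
  have hebound : ∀ n z, |e n z| ≤ ε n := by
    intro n z
    by_cases h : z ∈ V n
    · simp only [hedef, dif_pos h, abs_mul]
      calc |φ n z| * |g n ⟨z, hVU n h⟩ - t| ≤ 1 * (ε n) := by
            apply mul_le_mul
            · rw [abs_of_nonneg (hφ01 n z).1]; exact (hφ01 n z).2
            · exact (hVb n z h (hVU n h)).le
            · exact abs_nonneg _
            · exact zero_le_one
        _ = ε n := one_mul _
    · rw [he0 n z h, abs_zero]; exact (hεpos n).le
  have hecont : ∀ n, Continuous (e n) := by
    intro n
    rw [continuous_iff_continuousAt]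
    intro z
    by_cases h : z ∈ V n
    · have hcongr : ContinuousOn (e n) (V n) := by
        rw [continuousOn_iff_continuous_restrict]
        have hrestr : (V n).restrict (e n) =
            fun p : ↥(V n) => φ n (p : X) * (g n (Set.inclusion (hVU n) p) - t) :=
          funext fun p => dif_pos p.2
        rw [show (V n).domRestrict (e n) = (V n).restrict (e n) from rfl, hrestr]
        exact ((φ n).continuous.comp continuous_subtype_val).mul
          (((g n).continuous.comp (continuous_inclusion (hVU n))).sub continuous_const)
      exact hcongr.continuousAt ((hVo n).mem_nhds h)
    · have hz' : z ∈ (tsupport (φ n))ᶜ := fun hc => h (hφV n hc)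
      have heq : e n =ᶠ[nhds z] fun _ => (0 : ℝ) :=
        eventually_of_mem ((isClosed_tsupport (φ n)).isOpen_compl.mem_nhds hz')
          (fun w hw => he0' n w hw)
      exact continuousAt_const.congr heq.symm
  -- disjointness facts
  have hVnU : ∀ {m n : ℕ}, m ≠ n → ∀ z, z ∈ V m → z ∉ U n := by
    intro m n hmn z hzV hzU
    exact Set.disjoint_left.mp (hUd hmn) (hVU m hzV) hzU
  -- the sum
  set E : X → ℝ := fun z => ∑' n, e n z with hEdef
  have hEU : ∀ m z, z ∈ U m → E z = e m z := by
    intro m z hz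
    exact tsum_eq_single m fun n hnm => he0 n z fun hzV => hVnU hnm z hzV hz
  have hE0 : ∀ z, (∀ n, z ∉ V n) → E z = 0 := by
    intro z hz
    have : (fun n => e n z) = fun _ => (0 : ℝ) := funext fun n => he0 n z (hz n)
    rw [hEdef]; simp only [this, tsum_zero]
  have hEcont : Continuous E := by
    rw [continuous_iff_continuousAt]
    intro z
    by_cases h : ∃ m, z ∈ U m
    · obtain ⟨m, hm⟩ := h
      refine (hecont m).continuousAt.congr ?_
      exact eventually_of_mem ((hUo m).mem_nhds hm) fun w hw => (hEU m w hw).symm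
    · push_neg at h
      have hzV : ∀ n, z ∉ V n := fun n hc => h n (hVU n hc)
      unfold ContinuousAt
      rw [hE0 z hzV, NormedAddCommGroup.tendsto_nhds_zero]
      intro δ hδ
      obtain ⟨N, hN⟩ := (hε0.eventually_lt_const hδ).exists_forall_of_atTop
      have hWopen : IsOpen (⋂ m ∈ Finset.range N, (tsupport (φ m))ᶜ) :=
        isOpen_biInter_finset fun m _ => (isClosed_tsupport (φ m)).isOpen_compl
      have hzW : z ∈ ⋂ m ∈ Finset.range N, (tsupport (φ m))ᶜ := by
        simp only [mem_iInter, mem_compl_iff]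
        intro m _ hc
        exact h m (hVU m (hφV m hc))
      filter_upwards [hWopen.mem_nhds hzW] with w hw
      by_cases hw' : ∃ n, w ∈ V n
      · obtain ⟨n, hn⟩ := hw'
        have hEw : E w = e n w :=
          tsum_eq_single n fun m hmn => he0 m w fun hc => hVnU hmn w hc (hVU n hn)
        rw [hEw]
        rcases lt_or_ge n N with hnN | hnN
        · have : w ∉ tsupport (φ n) := by
            simp only [mem_iInter, mem_compl_iff] at hw
            exact hw n (Finset.mem_range.mpr hnN)
          rw [he0' n w this]; simpa using hδ
        · calc ‖e n w‖ = |e n w| := rfl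
            _ ≤ ε n := hebound n w
            _ < δ := hN n hnN
      · push_neg at hw'
        rw [hE0 w hw']; simpa using hδ
  -- conclude
  refine ⟨fun z => t + E z, by continuity, ?_, ?_⟩
  · intro n
    have hsub : interior (K2 n) ⊆ V n :=
      interior_subset.trans ((hK2K1 n).trans (interior_subset.trans (hK1V n)))
    refine ⟨interior (K2 n), isOpen_interior.mem_nhds (hxK2 n),
      hsub.trans (hVU n), ?_⟩
    intro z hz
    have hzV : z ∈ V n := hsub hz
    have hzU : z ∈ U n := hVU n hzV
    have h1 : E z = e n z := hEU n z hzU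
    have h2 : e n z = φ n z * (g n ⟨z, hVU n hzV⟩ - t) := dif_pos hzV
    have h3 : φ n z = 1 := hφ1 n (interior_subset hz)
    show t + E z = _
    rw [h1, h2, h3, one_mul]
    ring
  · intro z hz
    have hzV : ∀ n, z ∉ V n := fun n hc => hz (mem_iUnion.mpr ⟨n, hVU n hc⟩)
    show t + E z = t
    rw [hE0 z hzV, add_zero]
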